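/- arXiv:1402.4187 — 2 statements merged into one kernel-verified Lean document; each statement's English description precedes it below -/
import Mathlib

section
/- If a policy μ is admissible on a subset Ω containing a neighborhood N₀ of the origin, and Υ ⊆ D is a subset of the region of attraction R_A(μ) on which trajectories are feasible (remain in D for all t ≥ 0), then the value function V^μ(x₀) = ∫₀^∞ r(φ(τ;x₀,μ), μ(φ(τ;x₀,μ))) dτ is finite for every x₀ ∈ Υ, i.e., μ is admissible on Υ. -/
open MeasureTheory Set Filter

/-- If the policy `μ` is admissible on `Ω ⊇ N₀` (a neighborhood of the origin),
and `Υ ⊆ D` is a feasible subset of the region of attraction of `μ` (trajectories starting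
in `Υ` remain in `D` and tend to the origin), then the value function
`V^μ(x₀) = ∫₀^∞ ρ(φ(τ;x₀,μ)) dτ` (with running cost `ρ(x) = r(x, μ(x))`) is finite for
every `x₀ ∈ Υ`; i.e. `μ` is admissible on `Υ`. Finiteness of the value is expressed as
integrability of the running cost along the trajectory. -/
theorem admissibility_on_feasible_attraction_subset {n : ℕ}
    (D Ω Υ N₀ : Set (Fin n → ℝ))
    -- trajectory map: `φ x₀ t = φ(t; x₀, μ)`
    (φ : (Fin n → ℝ) → ℝ → (Fin n → ℝ))
    -- running cost along the state: `ρ x = r (x, μ x) = Q x + μ(x)ᵀ R μ(x)`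
    (ρ : (Fin n → ℝ) → ℝ)
    (hρ_nonneg : ∀ x, 0 ≤ ρ x) (hρ_cont : Continuous ρ)
    -- trajectories start at `x₀`, are continuous in time, and satisfy the semigroup property
    (hφ_init : ∀ x₀, φ x₀ 0 = x₀)
    (hφ_cont : ∀ x₀, Continuous (φ x₀))
    (hφ_semigroup : ∀ x₀ t s, 0 ≤ t → 0 ≤ s → φ x₀ (t + s) = φ (φ x₀ t) s)
    -- `N₀` is a neighborhood of the origin contained in `Ω`
    (hN₀_sub : N₀ ⊆ Ω) (hN₀_nhds : N₀ ∈ nhds (0 : Fin n → ℝ))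
    -- admissibility of `μ` on `Ω`: trajectories from `Ω` stay in `D`, tend to `0`,
    -- and the value function is finite on `Ω`
    (hΩD : Ω ⊆ D)
    (hΩ_feas : ∀ x₀ ∈ Ω, ∀ t : ℝ, 0 ≤ t → φ x₀ t ∈ D)
    (hΩ_attr : ∀ x₀ ∈ Ω, Tendsto (φ x₀) atTop (nhds 0))
    (hΩ_finite : ∀ x₀ ∈ Ω, IntegrableOn (fun τ => ρ (φ x₀ τ)) (Ioi 0))
    -- `Υ ⊆ D` is a feasible subset of the region of attraction `R_A(μ)`
    (hΥD : Υ ⊆ D)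
    (hΥ_feas : ∀ x₀ ∈ Υ, ∀ t : ℝ, 0 ≤ t → φ x₀ t ∈ D)
    (hΥ_attr : ∀ x₀ ∈ Υ, Tendsto (φ x₀) atTop (nhds 0)) :
    ∀ x₀ ∈ Υ, IntegrableOn (fun τ => ρ (φ x₀ τ)) (Ioi 0) := by
  intro x₀ hx₀
  -- find T ≥ 0 with φ x₀ T ∈ N₀
  have hev : ∀ᶠ t in atTop, φ x₀ t ∈ N₀ := (hΥ_attr x₀ hx₀).eventually_mem hN₀_nhds
  obtain ⟨T, hT⟩ := (hev.and (eventually_ge_atTop (0:ℝ))).exists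
  obtain ⟨hTN, hT0⟩ := hT
  set y := φ x₀ T with hy
  have hyΩ : y ∈ Ω := hN₀_sub hTN
  have h1 : IntegrableOn (fun τ => ρ (φ x₀ τ)) (Ioc 0 T) := by
    apply ContinuousOn.integrableOn_compact isCompact_Icc
      (Continuous.continuousOn (hρ_cont.comp (hφ_cont x₀))) |>.mono_set Ioc_subset_Icc_self
  have h2 : IntegrableOn (fun τ => ρ (φ x₀ τ)) (Ioi T) := by
    have h := hΩ_finite y hyΩ
    have h' : Integrable (fun s => (Ioi (0:ℝ)).indicator (fun s => ρ (φ y s)) (s - T)) := by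
      exact (h.integrable_indicator measurableSet_Ioi).comp_sub_right T
    have heq : ∀ s, (Ioi (0:ℝ)).indicator (fun s => ρ (φ y s)) (s - T)
        = (Ioi T).indicator (fun τ => ρ (φ x₀ τ)) s := by
      intro s
      by_cases hs : T < s
      · rw [indicator_of_mem (by simpa using hs), indicator_of_mem (mem_Ioi.mpr hs)]
        have : φ x₀ s = φ y (s - T) := by
          rw [hy, ← hφ_semigroup x₀ T (s - T) hT0 (by linarith)]
          ring_nf
        rw [this]
      · rw [indicator_of_notMem (by simpa using hs), indicator_of_notMem (by simpa using hs)]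
    rw [← integrable_indicator_iff measurableSet_Ioi]
    exact h'.congr (Eventually.of_forall heq)
  have : Ioi (0:ℝ) ⊆ Ioc 0 T ∪ Ioi T := by
    intro s hs
    rcases le_or_gt s T with h | h
    · exact Or.inl ⟨hs, h⟩
    · exact Or.inr h
  exact (h1.union h2).mono_set this
end

section
/- Suppose μᵢ is admissible on Ωᵢ, V^{μᵢ} ∈ C¹(Ωᵢ) satisfies the Lyapunov equation ∇V^{μᵢ}ᵀ(f+gμᵢ) = −Q − μᵢᵀRμᵢ on Ωᵢ, and the improved policy is μᵢ₊₁(x) = −½R⁻¹g(x)ᵀ∇V^{μᵢ}(x). Then the derivative of V^{μᵢ} along the new closed-loop vector field satisfies ∇V^{μᵢ}(x)ᵀ(f(x)+g(x)μᵢ₊₁(x)) = −Q(x) − μᵢ(x)ᵀRμᵢ(x) − 2μᵢ₊₁(x)ᵀR(μᵢ₊₁(x) − μᵢ(x)) ≤ −(Q(x) + μᵢ₊₁(x)ᵀRμᵢ₊₁(x)) for all x ∈ Ωᵢ. -/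
open Matrix

/-- If `V^{μᵢ}` (with gradient field `p`) satisfies the Lyapunov equation
`pᵀ(f + g μᵢ) = −Q − μᵢᵀRμᵢ` on `Ωᵢ` and `μᵢ₊₁ = −½R⁻¹gᵀp`, then along the new closed loop
`pᵀ(f + g μᵢ₊₁) = −Q − μᵢᵀRμᵢ − 2μᵢ₊₁ᵀR(μᵢ₊₁ − μᵢ) ≤ −(Q + μᵢ₊₁ᵀRμᵢ₊₁)` on `Ωᵢ`. -/
theorem policy_improvement_derivative {n m : ℕ}
    (Ω : Set (Fin n → ℝ))
    (f : (Fin n → ℝ) → (Fin n → ℝ))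
    (g : (Fin n → ℝ) → Matrix (Fin n) (Fin m) ℝ)
    (R : Matrix (Fin m) (Fin m) ℝ) (hRsym : R.IsSymm) (hR : R.PosDef)
    (Q : (Fin n → ℝ) → ℝ)
    (μ μnext : (Fin n → ℝ) → (Fin m → ℝ))
    (p : (Fin n → ℝ) → (Fin n → ℝ))  -- the gradient ∇V^{μᵢ}
    (hLyap : ∀ x ∈ Ω,
      p x ⬝ᵥ (f x + g x *ᵥ μ x) = -(Q x) - μ x ⬝ᵥ (R *ᵥ μ x))
    (hImprove : ∀ x ∈ Ω,
      μnext x = -(1 / 2 : ℝ) • (R⁻¹ *ᵥ ((g x)ᵀ *ᵥ p x))) :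
    ∀ x ∈ Ω,
      p x ⬝ᵥ (f x + g x *ᵥ μnext x)
          = -(Q x) - μ x ⬝ᵥ (R *ᵥ μ x) - 2 * (μnext x ⬝ᵥ (R *ᵥ (μnext x - μ x))) ∧
      p x ⬝ᵥ (f x + g x *ᵥ μnext x) ≤ -(Q x + μnext x ⬝ᵥ (R *ᵥ μnext x)) := by
  intro x hx
  have hsym2 : ∀ a b : Fin m → ℝ, a ⬝ᵥ (R *ᵥ b) = b ⬝ᵥ (R *ᵥ a) := by
    intro a b
    rw [Matrix.dotProduct_mulVec]
    nth_rewrite 1 [← hRsym.eq]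
    rw [Matrix.vecMul_transpose, dotProduct_comm]
  have hRinv : R * R⁻¹ = 1 := mul_nonsing_inv R hR.det_pos.ne'.isUnit
  have hgp : (g x)ᵀ *ᵥ p x = (-2 : ℝ) • (R *ᵥ μnext x) := by
    rw [hImprove x hx, mulVec_smul, mulVec_mulVec, hRinv, one_mulVec, smul_smul]
    norm_num
  have key : ∀ v : Fin m → ℝ, p x ⬝ᵥ (g x *ᵥ v) = -2 * (μnext x ⬝ᵥ (R *ᵥ v)) := by
    intro v
    have h1 : p x ⬝ᵥ (g x *ᵥ v) = ((g x)ᵀ *ᵥ p x) ⬝ᵥ v := by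
      rw [Matrix.dotProduct_mulVec, mulVec_transpose]
    rw [h1, hgp, smul_dotProduct, smul_eq_mul, dotProduct_comm (R *ᵥ μnext x) v,
      hsym2 v (μnext x)]
  have heq : p x ⬝ᵥ (f x + g x *ᵥ μnext x)
      = -(Q x) - μ x ⬝ᵥ (R *ᵥ μ x) - 2 * (μnext x ⬝ᵥ (R *ᵥ (μnext x - μ x))) := by
    have hv : μ x + (μnext x - μ x) = μnext x := by abel
    have expand : p x ⬝ᵥ (f x + g x *ᵥ μnext x)
        = p x ⬝ᵥ (f x + g x *ᵥ μ x) + p x ⬝ᵥ (g x *ᵥ (μnext x - μ x)) := by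
      rw [← dotProduct_add]
      congr 1
      rw [add_assoc, ← Matrix.mulVec_add, hv]
    rw [expand, hLyap x hx, key]
    ring
  refine ⟨heq, ?_⟩
  rw [heq]
  have hpsd := hR.posSemidef.dotProduct_mulVec_nonneg (μ x - μnext x)
  simp only [star_trivial] at hpsd
  have hexp : (μ x - μnext x) ⬝ᵥ (R *ᵥ (μ x - μnext x))
      = μ x ⬝ᵥ (R *ᵥ μ x) - μ x ⬝ᵥ (R *ᵥ μnext x) - μnext x ⬝ᵥ (R *ᵥ μ x)
        + μnext x ⬝ᵥ (R *ᵥ μnext x) := by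
    rw [Matrix.mulVec_sub, dotProduct_sub, sub_dotProduct, sub_dotProduct]
    ring
  have hsymdot := hsym2 (μ x) (μnext x)
  rw [Matrix.mulVec_sub, dotProduct_sub]
  nlinarith [hpsd, hexp, hsymdot]
end
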